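/- Let (w₀,w₁,w₂) ∈ ℤ³ be a primitive vector (i.e. gcd(w₀,w₁,w₂) = 1 and (w₀,w₁,w₂) ≠ (0,0,0)) and let U₀, U₁, U₂ ≥ 1 be real numbers. Then the number of primitive vectors (u₀,u₁,u₂) ∈ ℤ³ satisfying |u_i| ≤ U_i for i ∈ {0,1,2} and u₀w₀ + u₁w₁ + u₂w₂ = 0 is at most 12π · U₀U₁U₂ / max{|w₀|U₀, |w₁|U₁, |w₂|U₂} + 4. -/

import Mathlib

open Real

/-- A vector in `ℤ³` is primitive if the gcd of its three coordinates is `1`. -/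
def IsPrimitiveVec (w : ℤ × ℤ × ℤ) : Prop :=
  Int.gcd w.1 (Int.gcd w.2.1 w.2.2) = 1

lemma bezout3 {w : ℤ × ℤ × ℤ} (h : IsPrimitiveVec w) :
    ∃ x y z : ℤ, x * w.1 + y * w.2.1 + z * w.2.2 = 1 := by
  obtain ⟨a, b, c⟩ := w
  rw [IsPrimitiveVec] at h
  obtain ⟨A, B, h1⟩ : ∃ A B : ℤ, 1 = a * A + (Int.gcd b c : ℤ) * B := by
    refine ⟨Int.gcdA a (Int.gcd b c), Int.gcdB a (Int.gcd b c), ?_⟩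
    have := Int.gcd_eq_gcd_ab a (Int.gcd b c)
    rw [h] at this; exact_mod_cast this
  obtain ⟨X, Y, h2⟩ : ∃ X Y : ℤ, (Int.gcd b c : ℤ) = b * X + c * Y :=
    ⟨_, _, Int.gcd_eq_gcd_ab b c⟩
  exact ⟨A, X * B, Y * B, by rw [h2] at h1; linear_combination -h1⟩

lemma cross_par {w u v : ℤ × ℤ × ℤ} (hw : IsPrimitiveVec w)
    (hu : u.1 * w.1 + u.2.1 * w.2.1 + u.2.2 * w.2.2 = 0)
    (hv : v.1 * w.1 + v.2.1 * w.2.1 + v.2.2 * w.2.2 = 0) :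
    ∃ k : ℤ, u.2.1 * v.2.2 - u.2.2 * v.2.1 = k * w.1 ∧
      u.2.2 * v.1 - u.1 * v.2.2 = k * w.2.1 ∧
      u.1 * v.2.1 - u.2.1 * v.1 = k * w.2.2 := by
  obtain ⟨x, y, z, hxyz⟩ := bezout3 hw
  set c1 := u.2.1 * v.2.2 - u.2.2 * v.2.1 with hc1
  set c2 := u.2.2 * v.1 - u.1 * v.2.2 with hc2
  set c3 := u.1 * v.2.1 - u.2.1 * v.1 with hc3
  have p12 : c1 * w.2.1 = c2 * w.1 := by
    rw [hc1, hc2]; linear_combination v.2.2 * hu - u.2.2 * hv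
  have p13 : c1 * w.2.2 = c3 * w.1 := by
    rw [hc1, hc3]; linear_combination (-v.2.1) * hu + u.2.1 * hv
  have p23 : c2 * w.2.2 = c3 * w.2.1 := by
    rw [hc2, hc3]; linear_combination v.1 * hu - u.1 * hv
  refine ⟨x * c1 + y * c2 + z * c3, ?_, ?_, ?_⟩
  · linear_combination (-c1) * hxyz + y * p12 + z * p13
  · linear_combination (-c2) * hxyz - x * p12 + z * p23
  · linear_combination (-c3) * hxyz - x * p13 - y * p23

lemma gcd3_mul (t a b c : ℤ) :
    Int.gcd (t * a) (Int.gcd (t * b) (t * c)) = t.natAbs * Int.gcd a (Int.gcd b c) := by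
  simp [Int.gcd, Int.natAbs_mul, Nat.gcd_mul_left, Int.natAbs_abs]

lemma par_pm {u v : ℤ × ℤ × ℤ} (hu : IsPrimitiveVec u) (hv : IsPrimitiveVec v)
    (h1 : u.2.1 * v.2.2 - u.2.2 * v.2.1 = 0)
    (h2 : u.2.2 * v.1 - u.1 * v.2.2 = 0)
    (h3 : u.1 * v.2.1 - u.2.1 * v.1 = 0) : v = u ∨ v = -u := by
  obtain ⟨x, y, z, hxyz⟩ := bezout3 hu
  set t := x * v.1 + y * v.2.1 + z * v.2.2 with ht
  have e1 : v.1 = t * u.1 := by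
    rw [ht]; linear_combination (-v.1) * hxyz + z * h2 + (-y) * h3
  have e2 : v.2.1 = t * u.2.1 := by
    rw [ht]; linear_combination (-v.2.1) * hxyz + (-z) * h1 + x * h3
  have e3 : v.2.2 = t * u.2.2 := by
    rw [ht]; linear_combination (-v.2.2) * hxyz + y * h1 + (-x) * h2
  have hg : Int.gcd v.1 (Int.gcd v.2.1 v.2.2) = t.natAbs * Int.gcd u.1 (Int.gcd u.2.1 u.2.2) := by
    rw [e1, e2, e3]; exact gcd3_mul t u.1 u.2.1 u.2.2
  rw [IsPrimitiveVec] at hv hu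
  rw [hv, hu, mul_one] at hg
  have : t = 1 ∨ t = -1 := Int.natAbs_eq_iff.mp hg.symm |>.imp (by simp) (by simp)
  rcases this with h | h <;> [left; right] <;>
    · rw [h] at e1 e2 e3
      refine Prod.ext ?_ (Prod.ext ?_ ?_) <;> simp [e1, e2, e3]

lemma abs_sin_le_abs (x : ℝ) : |Real.sin x| ≤ |x| := by
  have key : ∀ y : ℝ, 0 ≤ y → |Real.sin y| ≤ y := by
    intro y hy
    rcases le_total y 1 with h | h
    · rw [abs_of_nonneg (Real.sin_nonneg_of_nonneg_of_le_pi hy (h.trans (by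
        linarith [Real.pi_gt_three])))]
      exact Real.sin_le hy
    · exact (Real.abs_sin_le_one y).trans h
  rcases le_total 0 x with h | h
  · rw [abs_of_nonneg h]; exact key x h
  · rw [abs_of_nonpos h]
    calc |Real.sin x| = |Real.sin (-x)| := by rw [Real.sin_neg, abs_neg]
      _ ≤ -x := key (-x) (by linarith)

lemma gapcount {A : Set ℝ} (hA : A.Finite) {c B : ℝ} (hc : 0 < c) (hB : 0 ≤ B)
    (hmem : ∀ a ∈ A, a ∈ Set.Ico (0:ℝ) B)
    (hgap : ∀ a ∈ A, ∀ b ∈ A, a ≠ b → c ≤ |a - b|) :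
    (A.ncard : ℝ) ≤ B / c + 1 := by
  set f : ℝ → ℕ := fun a => ⌊a / c⌋.toNat with hf
  have hinj : Set.InjOn f A := by
    intro a ha b hb hfe
    by_contra hne
    have hga := hgap a ha b hb hne
    have ha0 := (hmem a ha).1
    have hb0 := (hmem b hb).1
    have h1 : (0:ℤ) ≤ ⌊a / c⌋ := Int.floor_nonneg.mpr (div_nonneg ha0 hc.le)
    have h2 : (0:ℤ) ≤ ⌊b / c⌋ := Int.floor_nonneg.mpr (div_nonneg hb0 hc.le)
    simp only [hf] at hfe
    have hfa : ⌊a / c⌋ = ⌊b / c⌋ := by omega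
    have hlt : |a / c - b / c| < 1 := Int.abs_sub_lt_one_of_floor_eq_floor hfa
    have : |a - b| < c := by
      have : |a - b| / c < 1 := by
        rw [← abs_of_pos hc, ← abs_div]
        convert hlt using 2
        exacts [rfl, rfl, sub_div a b c]
      calc |a - b| = |a - b| / c * c := by field_simp
        _ < 1 * c := by exact mul_lt_mul_of_pos_right this hc
        _ = c := one_mul c
    linarith
  have himg : f '' A ⊆ Set.Iic (⌊B / c⌋.toNat) := by
    rintro - ⟨a, ha, rfl⟩
    have h1 := (hmem a ha).1
    have h2 := (hmem a ha).2
    have : ⌊a / c⌋ ≤ ⌊B / c⌋ := Int.floor_le_floor (by gcongr)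
    simp only [Set.mem_Iic, hf]
    omega
  have hIic : (Set.Iic (⌊B / c⌋.toNat)).ncard = ⌊B / c⌋.toNat + 1 := by
    rw [← Nat.card_coe_set_eq, Nat.card_eq_card_toFinset]
    simp
  have hcard : A.ncard ≤ ⌊B / c⌋.toNat + 1 := by
    rw [← Set.ncard_image_of_injOn hinj]
    calc (f '' A).ncard ≤ (Set.Iic (⌊B / c⌋.toNat)).ncard :=
          Set.ncard_le_ncard himg (Set.finite_Iic _)
      _ = _ := hIic
  have hle : ((⌊B / c⌋.toNat : ℝ)) ≤ B / c := by
    have h0 : (0:ℤ) ≤ ⌊B / c⌋ := Int.floor_nonneg.mpr (div_nonneg hB hc.le)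
    have : ((⌊B / c⌋.toNat : ℤ) : ℝ) = ((⌊B / c⌋ : ℤ) : ℝ) := by
      norm_cast; omega
    rw [show ((⌊B / c⌋.toNat : ℝ)) = ((⌊B / c⌋.toNat : ℤ) : ℝ) by norm_cast, this]
    exact Int.floor_le _
  calc (A.ncard : ℝ) ≤ ((⌊B / c⌋.toNat + 1 : ℕ) : ℝ) := by exact_mod_cast hcard
    _ = (⌊B / c⌋.toNat : ℝ) + 1 := by push_cast; ring
    _ ≤ B / c + 1 := by linarith

lemma im_conj_mul (z w : ℂ) :
    ((starRingEnd ℂ) z * w).im = ‖z‖ * ‖w‖ * Real.sin (w.arg - z.arg) := by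
  rcases eq_or_ne z 0 with rfl | hz
  · simp
  rcases eq_or_ne w 0 with rfl | hw
  · simp
  have haz : ‖z‖ ≠ 0 := norm_ne_zero_iff.mpr hz
  have haw : ‖w‖ ≠ 0 := norm_ne_zero_iff.mpr hw
  rw [Real.sin_sub, Complex.sin_arg, Complex.cos_arg hz, Complex.sin_arg, Complex.cos_arg hw]
  simp only [Complex.mul_im, Complex.conj_re, Complex.conj_im]
  field_simp
  ring

lemma im_conj_mul' (z w : ℂ) :
    ((starRingEnd ℂ) z * w).im = z.re * w.im - z.im * w.re := by
  simp [Complex.mul_im]; ring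

lemma int_box {x : ℤ} {U : ℝ} (h : (|x| : ℝ) ≤ U) : -⌈U⌉ ≤ x ∧ x ≤ ⌈U⌉ := by
  have h' : |(x:ℝ)| ≤ U := by push_cast at h; exact h
  obtain ⟨h1, h2⟩ := abs_le.mp h'
  constructor
  · exact_mod_cast le_trans (neg_le_neg (Int.le_ceil U)) h1
  · exact_mod_cast h2.trans (Int.le_ceil U)

lemma countC (w : ℤ × ℤ × ℤ) (hw : IsPrimitiveVec w) (hw1 : w.1 ≠ 0)
    (U₀ U₁ U₂ : ℝ) (hU₀ : 1 ≤ U₀) (hU₁ : 1 ≤ U₁) (hU₂ : 1 ≤ U₂) :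
    (({u : ℤ × ℤ × ℤ | IsPrimitiveVec u ∧
        (|u.1| : ℝ) ≤ U₀ ∧ (|u.2.1| : ℝ) ≤ U₁ ∧ (|u.2.2| : ℝ) ≤ U₂ ∧
        u.1 * w.1 + u.2.1 * w.2.1 + u.2.2 * w.2.2 = 0}.ncard : ℝ)) ≤
      8 * π * (U₁ * U₂) / |(w.1 : ℝ)| + 2 := by
  have hU₁0 : (0:ℝ) < U₁ := by linarith
  have hU₂0 : (0:ℝ) < U₂ := by linarith
  have hw1R : (0:ℝ) < |(w.1 : ℝ)| := by
    simp only [abs_pos]; exact_mod_cast hw1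
  set S := {u : ℤ × ℤ × ℤ | IsPrimitiveVec u ∧
        (|u.1| : ℝ) ≤ U₀ ∧ (|u.2.1| : ℝ) ≤ U₁ ∧ (|u.2.2| : ℝ) ≤ U₂ ∧
        u.1 * w.1 + u.2.1 * w.2.1 + u.2.2 * w.2.2 = 0} with hSdef
  -- finiteness
  have hSfin : S.Finite := by
    apply Set.Finite.subset (Set.finite_Icc
      ((-⌈U₀⌉, -⌈U₁⌉, -⌈U₂⌉) : ℤ × ℤ × ℤ) ((⌈U₀⌉, ⌈U₁⌉, ⌈U₂⌉) : ℤ × ℤ × ℤ))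
    rintro u ⟨-, h0, h1, h2, -⟩
    obtain ⟨a0, b0⟩ := int_box h0
    obtain ⟨a1, b1⟩ := int_box h1
    obtain ⟨a2, b2⟩ := int_box h2
    simp only [Set.mem_Icc, Prod.le_def]
    exact ⟨⟨a0, a1, a2⟩, b0, b1, b2⟩
  -- nondegeneracy of the shadow
  have hkey : ∀ u ∈ S, ¬(u.2.1 = 0 ∧ u.2.2 = 0) := by
    rintro u ⟨hup, -, -, -, heq⟩ ⟨e1, e2⟩
    rw [e1, e2] at heq
    simp only [zero_mul, add_zero] at heq
    have hu1 : u.1 = 0 := (mul_eq_zero.mp heq).resolve_right hw1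
    rw [IsPrimitiveVec, hu1, e1, e2] at hup
    simp at hup
  -- negation closure
  have hnegmem : ∀ u ∈ S, -u ∈ S := by
    rintro u ⟨hup, h0, h1, h2, heq⟩
    refine ⟨?_, ?_, ?_, ?_, ?_⟩
    · have := gcd3_mul (-1) u.1 u.2.1 u.2.2
      simp only [neg_one_mul, Int.natAbs_neg, Int.natAbs_one, one_mul] at this
      rw [IsPrimitiveVec] at hup ⊢
      show Int.gcd (-u.1) (Int.gcd (-u.2.1) (-u.2.2)) = 1
      rw [this, hup]
    · simpa using h0
    · simpa using h1
    · simpa using h2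
    · show (-u.1) * w.1 + (-u.2.1) * w.2.1 + (-u.2.2) * w.2.2 = 0
      linear_combination -heq
  -- split into positive and negative halves
  set Sp := {u ∈ S | 0 < u.2.2 ∨ (u.2.2 = 0 ∧ 0 < u.2.1)} with hSp
  set Sm := {u ∈ S | ¬(0 < u.2.2 ∨ (u.2.2 = 0 ∧ 0 < u.2.1))} with hSm
  have hSpfin : Sp.Finite := hSfin.subset (Set.sep_subset _ _)
  have hSmfin : Sm.Finite := hSfin.subset (Set.sep_subset _ _)
  have hunion : S = Sp ∪ Sm := by
    ext u; constructor
    · intro hu; by_cases hp : 0 < u.2.2 ∨ (u.2.2 = 0 ∧ 0 < u.2.1)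
      · exact Or.inl ⟨hu, hp⟩
      · exact Or.inr ⟨hu, hp⟩
    · rintro (⟨hu, -⟩ | ⟨hu, -⟩) <;> exact hu
  have hdisj : Disjoint Sp Sm := by
    rw [Set.disjoint_left]; rintro u ⟨-, hp⟩ ⟨-, hnp⟩; exact hnp hp
  have hSm_img : Sm = (fun v => -v) '' Sp := by
    ext u; constructor
    · rintro ⟨hu, hnp⟩
      have hk := hkey u hu
      refine ⟨-u, ⟨hnegmem u hu, ?_⟩, by simp⟩
      show 0 < (-u).2.2 ∨ ((-u).2.2 = 0 ∧ 0 < (-u).2.1)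
      have e1 : (-u).2.2 = -u.2.2 := rfl
      have e2 : (-u).2.1 = -u.2.1 := rfl
      rw [e1, e2]; omega
    · rintro ⟨v, ⟨hv, hpv⟩, rfl⟩
      refine ⟨hnegmem v hv, ?_⟩
      have e1 : (-v).2.2 = -v.2.2 := rfl
      have e2 : (-v).2.1 = -v.2.1 := rfl
      rw [e1, e2]; omega
  have hSm_card : Sm.ncard = Sp.ncard := by
    rw [hSm_img]; exact Set.ncard_image_of_injOn (neg_injective.injOn)
  have hScard : S.ncard = 2 * Sp.ncard := by
    rw [hunion, Set.ncard_union_eq hdisj hSpfin hSmfin, hSm_card]; ring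
  -- the shadow map
  set σ : ℤ × ℤ × ℤ → ℂ := fun u => ⟨(u.2.1 : ℝ) / U₁, (u.2.2 : ℝ) / U₂⟩ with hσ
  have hσre : ∀ u, (σ u).re = (u.2.1 : ℝ) / U₁ := fun u => rfl
  have hσim : ∀ u, (σ u).im = (u.2.2 : ℝ) / U₂ := fun u => rfl
  have hσinj : Set.InjOn σ S := by
    intro u hu v hv he
    have e1 : (u.2.1 : ℝ) / U₁ = (v.2.1 : ℝ) / U₁ := by rw [← hσre u, ← hσre v, he]
    have e2 : (u.2.2 : ℝ) / U₂ = (v.2.2 : ℝ) / U₂ := by rw [← hσim u, ← hσim v, he]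
    have f1 : u.2.1 = v.2.1 := by
      field_simp at e1; exact_mod_cast e1
    have f2 : u.2.2 = v.2.2 := by
      field_simp at e2; exact_mod_cast e2
    have hequ := hu.2.2.2.2
    have heqv := hv.2.2.2.2
    have f0 : u.1 = v.1 := by
      have : u.1 * w.1 = v.1 * w.1 := by rw [f1, f2] at hequ; linarith
      exact mul_right_cancel₀ hw1 this
    exact Prod.ext f0 (Prod.ext f1 f2)
  set T := σ '' Sp with hT
  have hTfin : T.Finite := hSpfin.image σ
  have hTcard : T.ncard = Sp.ncard :=
    Set.ncard_image_of_injOn (hσinj.mono (Set.sep_subset _ _))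
  set d : ℝ := |(w.1 : ℝ)| / (U₁ * U₂) with hd
  have hd0 : 0 < d := div_pos hw1R (by positivity)
  -- pairwise cross-product bound
  have hcross : ∀ t ∈ T, ∀ t' ∈ T, t ≠ t' →
      d ≤ |t.re * t'.im - t.im * t'.re| := by
    rintro - ⟨u, hu, rfl⟩ - ⟨v, hv, rfl⟩ hne
    have hune : u ≠ v := fun h => hne (by rw [h])
    obtain ⟨huS, hupos⟩ := hu
    obtain ⟨hvS, hvpos⟩ := hv
    obtain ⟨k, hk1, hk2, hk3⟩ := cross_par hw huS.2.2.2.2 hvS.2.2.2.2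
    have hk0 : k ≠ 0 := by
      rintro rfl
      simp only [zero_mul] at hk1 hk2 hk3
      rcases par_pm huS.1 hvS.1 hk1 hk2 hk3 with h | h
      · exact hune h.symm
      · rw [h] at hvpos
        have e1 : (-u).2.2 = -u.2.2 := rfl
        have e2 : (-u).2.1 = -u.2.1 := rfl
        rw [e1, e2] at hvpos
        omega
    have hkR : (u.2.1:ℝ) * v.2.2 - (u.2.2:ℝ) * v.2.1 = (k:ℝ) * w.1 := by
      exact_mod_cast hk1
    have hcalc : (σ u).re * (σ v).im - (σ u).im * (σ v).re
        = ((k : ℝ) * (w.1 : ℝ)) / (U₁ * U₂) := by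
      rw [hσre, hσim, hσre, hσim]
      rw [show (u.2.1:ℝ)/U₁ * ((v.2.2:ℝ)/U₂) - (u.2.2:ℝ)/U₂ * ((v.2.1:ℝ)/U₁)
          = ((u.2.1:ℝ) * v.2.2 - (u.2.2:ℝ) * v.2.1) / (U₁*U₂) by
        field_simp]
      rw [hkR]
    have h1k : (1:ℝ) ≤ |(k:ℝ)| := by
      exact_mod_cast Int.one_le_abs (by exact_mod_cast hk0)
    rw [hcalc, abs_div, abs_mul]
    rw [hd, abs_of_pos (by positivity : (0:ℝ) < U₁ * U₂)]
    gcongr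
    nlinarith [abs_nonneg ((w.1:ℝ))]
  -- arguments lie in [0, π)
  have hargIco : ∀ t ∈ T, Complex.arg t ∈ Set.Ico 0 π := by
    rintro - ⟨u, ⟨huS, hupos⟩, rfl⟩
    have him : 0 ≤ (σ u).im := by
      rw [hσim]
      rcases hupos with h | ⟨h, -⟩
      · positivity
      · rw [h]; simp
    constructor
    · exact Complex.arg_nonneg_iff.mpr him
    · rcases lt_or_eq_of_le (Complex.arg_le_pi (σ u)) with h | h
      · exact h
      · exfalso
        obtain ⟨hre, him0⟩ := Complex.arg_eq_pi_iff.mp h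
        rw [hσim] at him0
        have h22 : u.2.2 = 0 := by
          field_simp at him0; simp at him0; exact_mod_cast him0
        rcases hupos with h' | ⟨-, h'⟩
        · omega
        · rw [hσre] at hre
          have : (0:ℝ) < (u.2.1:ℝ) / U₁ := by
            apply div_pos ?_ hU₁0
            exact_mod_cast h'
          linarith
  -- absolute values at most 2
  have habs : ∀ t ∈ T, ‖t‖ ≤ 2 := by
    rintro - ⟨u, ⟨huS, -⟩, rfl⟩
    have h1 : |(σ u).re| ≤ 1 := by
      rw [hσre, abs_div, abs_of_pos hU₁0, div_le_one hU₁0]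
      have := huS.2.2.1
      push_cast at this ⊢
      exact this
    have h2 : |(σ u).im| ≤ 1 := by
      rw [hσim, abs_div, abs_of_pos hU₂0, div_le_one hU₂0]
      have := huS.2.2.2.1
      push_cast at this ⊢
      exact this
    calc ‖σ u‖ ≤ |(σ u).re| + |(σ u).im| := Complex.norm_le_abs_re_add_abs_im _
      _ ≤ 2 := by linarith
  -- pairwise argument gaps
  have hgapT : ∀ t ∈ T, ∀ t' ∈ T, t ≠ t' → d / 4 ≤ |Complex.arg t - Complex.arg t'| := by
    intro t ht t' ht' hne
    have hc := hcross t ht t' ht' hne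
    have heq1 : t.re * t'.im - t.im * t'.re
        = ‖t‖ * ‖t'‖ * Real.sin (t'.arg - t.arg) := by
      rw [← im_conj_mul' t t', im_conj_mul]
    have hsin : d ≤ ‖t‖ * ‖t'‖ * |Real.sin (t'.arg - t.arg)| := by
      rw [heq1] at hc
      rwa [abs_mul, abs_of_nonneg (by positivity : (0:ℝ) ≤ ‖t‖ * ‖t'‖)] at hc
    have habst := habs t ht
    have habst' := habs t' ht'
    have h4 : d ≤ 4 * |Real.sin (t'.arg - t.arg)| := by
      have hs0 : (0:ℝ) ≤ |Real.sin (t'.arg - t.arg)| := abs_nonneg _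
      have hab4 : ‖t‖ * ‖t'‖ ≤ 4 := by
        nlinarith [norm_nonneg t, norm_nonneg t']
      have := mul_le_mul_of_nonneg_right hab4 hs0
      linarith
    have h5 := abs_sin_le_abs (t'.arg - t.arg)
    rw [abs_sub_comm]
    linarith
  -- apply the gap-counting lemma
  set A := Complex.arg '' T with hA
  have hAfin : A.Finite := hTfin.image _
  have harginj : Set.InjOn Complex.arg T := by
    intro t ht t' ht' he
    by_contra hne
    have := hgapT t ht t' ht' hne
    rw [he] at this
    simp at this
    linarith
  have hAcard : A.ncard = T.ncard := Set.ncard_image_of_injOn harginj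
  have hgapA : ∀ a ∈ A, ∀ b ∈ A, a ≠ b → d / 4 ≤ |a - b| := by
    rintro - ⟨t, ht, rfl⟩ - ⟨t', ht', rfl⟩ hne
    exact hgapT t ht t' ht' (fun h => hne (by rw [h]))
  have hAmem : ∀ a ∈ A, a ∈ Set.Ico (0:ℝ) π := by
    rintro - ⟨t, ht, rfl⟩; exact hargIco t ht
  have hmain : (A.ncard : ℝ) ≤ π / (d / 4) + 1 :=
    gapcount hAfin (by positivity) pi_nonneg hAmem hgapA
  -- put everything together
  have hπd : π / (d / 4) = 4 * π * (U₁ * U₂) / |(w.1:ℝ)| := by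
    rw [hd]; field_simp
  have hfinal : (S.ncard : ℝ) = 2 * (A.ncard : ℝ) := by
    rw [hAcard, hTcard, hScard]; push_cast; ring
  rw [hfinal]
  rw [hπd] at hmain
  have : 2 * (A.ncard:ℝ) ≤ 2 * (4 * π * (U₁ * U₂) / |(w.1:ℝ)| + 1) := by linarith
  calc 2 * (A.ncard:ℝ) ≤ 2 * (4 * π * (U₁ * U₂) / |(w.1:ℝ)| + 1) := this
    _ = 8 * π * (U₁ * U₂) / |(w.1:ℝ)| + 2 := by ring


lemma gcd3_rot (a b c : ℤ) : Int.gcd b (Int.gcd c a) = Int.gcd a (Int.gcd b c) := by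
  simp only [Int.gcd, Int.natAbs_natCast]
  rw [← Nat.gcd_assoc, ← Nat.gcd_assoc,
    Nat.gcd_comm (b.natAbs.gcd c.natAbs) a.natAbs, Nat.gcd_assoc]

lemma prim_rot {u : ℤ × ℤ × ℤ} (h : IsPrimitiveVec u) :
    IsPrimitiveVec (u.2.1, u.2.2, u.1) := by
  rw [IsPrimitiveVec] at h ⊢
  simpa using (gcd3_rot u.1 u.2.1 u.2.2).trans h

lemma rot_inj : Function.Injective (fun u : ℤ × ℤ × ℤ => (u.2.1, u.2.2, u.1)) := by
  rintro ⟨a1, a2, a3⟩ ⟨b1, b2, b3⟩ h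
  simp only [Prod.mk.injEq] at h
  simp [h.1, h.2.1, h.2.2]

lemma rot2_inj : Function.Injective (fun u : ℤ × ℤ × ℤ => (u.2.2, u.1, u.2.1)) := by
  rintro ⟨a1, a2, a3⟩ ⟨b1, b2, b3⟩ h
  simp only [Prod.mk.injEq] at h
  simp [h.1, h.2.1, h.2.2]

theorem stmt9 (w : ℤ × ℤ × ℤ) (hw : IsPrimitiveVec w) (hw0 : w ≠ 0)
    (U₀ U₁ U₂ : ℝ) (hU₀ : 1 ≤ U₀) (hU₁ : 1 ≤ U₁) (hU₂ : 1 ≤ U₂) :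
    (({u : ℤ × ℤ × ℤ | IsPrimitiveVec u ∧
        (|u.1| : ℝ) ≤ U₀ ∧ (|u.2.1| : ℝ) ≤ U₁ ∧ (|u.2.2| : ℝ) ≤ U₂ ∧
        u.1 * w.1 + u.2.1 * w.2.1 + u.2.2 * w.2.2 = 0}.ncard : ℝ)) ≤
      12 * π * (U₀ * U₁ * U₂) /
        max ((|w.1| : ℝ) * U₀) (max ((|w.2.1| : ℝ) * U₁) ((|w.2.2| : ℝ) * U₂)) + 4 := by
  have hU₀0 : (0:ℝ) < U₀ := by linarith
  have hU₁0 : (0:ℝ) < U₁ := by linarith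
  have hU₂0 : (0:ℝ) < U₂ := by linarith
  have hP0 : (0:ℝ) < U₀ * U₁ * U₂ := by positivity
  set S0 := {u : ℤ × ℤ × ℤ | IsPrimitiveVec u ∧
        (|u.1| : ℝ) ≤ U₀ ∧ (|u.2.1| : ℝ) ≤ U₁ ∧ (|u.2.2| : ℝ) ≤ U₂ ∧
        u.1 * w.1 + u.2.1 * w.2.1 + u.2.2 * w.2.2 = 0} with hS0
  set m0 := |((w.1 : ℤ) : ℝ)| * U₀ with hm0
  set m1 := |((w.2.1 : ℤ) : ℝ)| * U₁ with hm1
  set m2 := |((w.2.2 : ℤ) : ℝ)| * U₂ with hm2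
  set M := max m0 (max m1 m2) with hM
  have habs_cast : ∀ x : ℤ, ((|x| : ℤ) : ℝ) = |(x : ℝ)| := by
    intro x; push_cast; ring
  have key1 : ∀ (x : ℤ), x ≠ 0 → ∀ (U : ℝ), 1 ≤ U → (1:ℝ) ≤ |((x : ℤ) : ℝ)| * U := by
    intro x hx U hU
    have h1 : (1:ℝ) ≤ ((|x| : ℤ) : ℝ) := by exact_mod_cast Int.one_le_abs hx
    rw [habs_cast] at h1
    nlinarith
  have hMpos : 0 < M := by
    have hne : w.1 ≠ 0 ∨ w.2.1 ≠ 0 ∨ w.2.2 ≠ 0 := by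
      by_contra h; push_neg at h
      exact hw0 (Prod.ext h.1 (Prod.ext h.2.1 h.2.2))
    rcases hne with h | h | h
    · have := key1 w.1 h U₀ hU₀
      have hle : m0 ≤ M := le_max_left _ _
      rw [← hm0] at this; linarith
    · have := key1 w.2.1 h U₁ hU₁
      have hle : m1 ≤ M := le_trans (le_max_left _ _) (le_max_right _ _)
      rw [← hm1] at this; linarith
    · have := key1 w.2.2 h U₂ hU₂
      have hle : m2 ≤ M := le_trans (le_max_right _ _) (le_max_right _ _)
      rw [← hm2] at this; linarith
  have hstep : ∀ X wc : ℝ, 0 < wc → M = wc → X ≤ 8 * π * (U₀ * U₁ * U₂) / wc + 2 →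
      X ≤ 12 * π * (U₀ * U₁ * U₂) / M + 4 := by
    intro X wc hwc hMw hX
    rw [hMw]
    have h1 : 8 * π * (U₀ * U₁ * U₂) / wc ≤ 12 * π * (U₀ * U₁ * U₂) / wc := by
      rw [div_le_div_iff₀ hwc hwc]
      nlinarith [mul_pos (mul_pos Real.pi_pos hP0) hwc]
    linarith
  rcases max_choice m0 (max m1 m2) with hc | hc
  · -- the maximum is |w.1| * U₀
    have hMe : M = m0 := by rw [hM, hc]
    have hw1 : w.1 ≠ 0 := by
      intro h
      rw [hMe, hm0, h] at hMpos
      norm_num at hMpos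
    have hb : (S0.ncard : ℝ) ≤ 8 * π * (U₁ * U₂) / |((w.1 : ℤ) : ℝ)| + 2 :=
      countC w hw hw1 U₀ U₁ U₂ hU₀ hU₁ hU₂
    apply hstep _ m0 (hMe ▸ hMpos) hMe
    have hw1R : ((w.1:ℤ):ℝ) ≠ 0 := Int.cast_ne_zero.mpr hw1
    have habne : |((w.1:ℤ):ℝ)| ≠ 0 := abs_ne_zero.mpr hw1R
    have heq : 8 * π * (U₁ * U₂) / |((w.1:ℤ):ℝ)| = 8 * π * (U₀ * U₁ * U₂) / m0 := by
      rw [hm0]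
      rw [div_eq_div_iff habne (by positivity)]
      ring
    rw [← heq]
    exact hb
  · rcases max_choice m1 m2 with hc2 | hc2
    · -- the maximum is |w.2.1| * U₁
      have hMe : M = m1 := by rw [hM, hc, hc2]
      have hw21 : w.2.1 ≠ 0 := by
        intro h
        rw [hMe, hm1, h] at hMpos
        norm_num at hMpos
      set S1 := {u : ℤ × ℤ × ℤ | IsPrimitiveVec u ∧
          (|u.1| : ℝ) ≤ U₁ ∧ (|u.2.1| : ℝ) ≤ U₂ ∧ (|u.2.2| : ℝ) ≤ U₀ ∧
          u.1 * w.2.1 + u.2.1 * w.2.2 + u.2.2 * w.1 = 0} with hS1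
      have hb : (S1.ncard : ℝ) ≤ 8 * π * (U₂ * U₀) / |((w.2.1 : ℤ) : ℝ)| + 2 :=
        countC (w.2.1, w.2.2, w.1) (prim_rot hw) hw21 U₁ U₂ U₀ hU₁ hU₂ hU₀
      have himg : S1 = (fun u : ℤ × ℤ × ℤ => (u.2.1, u.2.2, u.1)) '' S0 := by
        ext v
        simp only [hS1, hS0, Set.mem_image, Set.mem_setOf_eq]
        constructor
        · rintro ⟨hp, h1, h2, h3, he⟩
          refine ⟨(v.2.2, v.1, v.2.1), ⟨?_, h3, h1, h2, by linarith⟩, by simp⟩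
          exact prim_rot (prim_rot hp)
        · rintro ⟨u, ⟨hp, h1, h2, h3, he⟩, rfl⟩
          exact ⟨prim_rot hp, h2, h3, h1, by linarith⟩
      have hcard : (S0.ncard : ℝ) = (S1.ncard : ℝ) := by
        rw [himg, Set.ncard_image_of_injective _ rot_inj]
      apply hstep _ m1 (hMe ▸ hMpos) hMe
      have hw21R : ((w.2.1:ℤ):ℝ) ≠ 0 := Int.cast_ne_zero.mpr hw21
      have habne : |((w.2.1:ℤ):ℝ)| ≠ 0 := abs_ne_zero.mpr hw21R
      have heq : 8 * π * (U₂ * U₀) / |((w.2.1:ℤ):ℝ)| = 8 * π * (U₀ * U₁ * U₂) / m1 := by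
        rw [hm1]
        rw [div_eq_div_iff habne (by positivity)]
        ring
      rw [hcard, ← heq]
      exact hb
    · -- the maximum is |w.2.2| * U₂
      have hMe : M = m2 := by rw [hM, hc, hc2]
      have hw22 : w.2.2 ≠ 0 := by
        intro h
        rw [hMe, hm2, h] at hMpos
        norm_num at hMpos
      set S2 := {u : ℤ × ℤ × ℤ | IsPrimitiveVec u ∧
          (|u.1| : ℝ) ≤ U₂ ∧ (|u.2.1| : ℝ) ≤ U₀ ∧ (|u.2.2| : ℝ) ≤ U₁ ∧
          u.1 * w.2.2 + u.2.1 * w.1 + u.2.2 * w.2.1 = 0} with hS2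
      have hb : (S2.ncard : ℝ) ≤ 8 * π * (U₀ * U₁) / |((w.2.2 : ℤ) : ℝ)| + 2 :=
        countC (w.2.2, w.1, w.2.1) (prim_rot (prim_rot hw)) hw22 U₂ U₀ U₁ hU₂ hU₀ hU₁
      have himg : S2 = (fun u : ℤ × ℤ × ℤ => (u.2.2, u.1, u.2.1)) '' S0 := by
        ext v
        simp only [hS2, hS0, Set.mem_image, Set.mem_setOf_eq]
        constructor
        · rintro ⟨hp, h1, h2, h3, he⟩
          refine ⟨(v.2.1, v.2.2, v.1), ⟨?_, h2, h3, h1, by linarith⟩, by simp⟩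
          exact prim_rot hp
        · rintro ⟨u, ⟨hp, h1, h2, h3, he⟩, rfl⟩
          exact ⟨prim_rot (prim_rot hp), h3, h1, h2, by linarith⟩
      have hcard : (S0.ncard : ℝ) = (S2.ncard : ℝ) := by
        rw [himg, Set.ncard_image_of_injective _ rot2_inj]
      apply hstep _ m2 (hMe ▸ hMpos) hMe
      have hw22R : ((w.2.2:ℤ):ℝ) ≠ 0 := Int.cast_ne_zero.mpr hw22
      have habne : |((w.2.2:ℤ):ℝ)| ≠ 0 := abs_ne_zero.mpr hw22R
      have heq : 8 * π * (U₀ * U₁) / |((w.2.2:ℤ):ℝ)| = 8 * π * (U₀ * U₁ * U₂) / m2 := by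
        rw [hm2]
        rw [div_eq_div_iff habne (by positivity)]
        ring
      rw [hcard, ← heq]
      exact hb
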